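/- Let {M'_i}_{i∈ℤ} and {N'_i}_{i∈ℤ} be families of invertible l'×l' real matrices satisfying (M'_i)ᵀ N'_j = (M'_{i+k})ᵀ N'_{j+k} for all i, j, k ∈ ℤ. Then there exist invertible matrices A, B ∈ ℝ^{l'×l'} with N'_i = A^i N'_0 and M'_i = B^i M'_0 for all i ∈ ℤ, and moreover B = A^{-⊤} (the inverse transpose of A). -/

import Mathlib

open Matrix

lemma zpow_rec_aux {l' : ℕ} (A : Matrix (Fin l') (Fin l') ℝ) (hA : IsUnit A.det)
    (f : ℤ → Matrix (Fin l') (Fin l') ℝ) (hstep : ∀ j : ℤ, f (j + 1) = A * f j) :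
    ∀ i : ℤ, f i = A ^ i * f 0 := by
  intro i
  induction i using Int.induction_on with
  | zero => simp
  | succ n ih =>
      rw [hstep, ih, ← mul_assoc, zpow_add_one hA, (Matrix.Commute.self_zpow A (n : ℤ)).eq]
  | pred n ih =>
      have h1 : f (-(n : ℤ) - 1 + 1) = A * f (-(n : ℤ) - 1) := hstep _
      rw [sub_add_cancel] at h1
      have h2 : f (-(n : ℤ) - 1) = A⁻¹ * f (-(n : ℤ)) := by
        rw [h1, ← mul_assoc, nonsing_inv_mul A hA, one_mul]
      have hc : Commute A⁻¹ A := by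
        unfold Commute SemiconjBy
        rw [nonsing_inv_mul A hA, mul_nonsing_inv A hA]
      rw [h2, ih, ← mul_assoc, zpow_sub_one hA, (Matrix.Commute.zpow_right hc (-(n : ℤ))).eq]

theorem stmt8 {l' : ℕ}
    (M N : ℤ → Matrix (Fin l') (Fin l') ℝ)
    (hMunit : ∀ i : ℤ, IsUnit ((M i).det)) (hNunit : ∀ i : ℤ, IsUnit ((N i).det))
    (hshift : ∀ i j k : ℤ, (M i)ᵀ * N j = (M (i + k))ᵀ * N (j + k)) :
    ∃ A B : Matrix (Fin l') (Fin l') ℝ, IsUnit A.det ∧ IsUnit B.det ∧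
      (∀ i : ℤ, N i = A ^ i * N 0) ∧ (∀ i : ℤ, M i = B ^ i * M 0) ∧ B = (A⁻¹)ᵀ := by
  set A : Matrix (Fin l') (Fin l') ℝ := ((M 1)ᵀ)⁻¹ * (M 0)ᵀ with hAdef
  have hM1T : IsUnit (M 1)ᵀ.det := by rw [det_transpose]; exact hMunit 1
  have hAdet : IsUnit A.det := by
    rw [hAdef, det_mul, det_nonsing_inv, det_transpose, det_transpose]
    exact (isUnit_ringInverse.mpr (hMunit 1)).mul (hMunit 0)
  have hNstep : ∀ j : ℤ, N (j + 1) = A * N j := by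
    intro j
    have h := hshift 0 j 1
    rw [zero_add] at h
    rw [hAdef, mul_assoc, h, ← mul_assoc, nonsing_inv_mul _ hM1T, one_mul]
  have hN : ∀ i : ℤ, N i = A ^ i * N 0 := zpow_rec_aux A hAdet N hNstep
  set B : Matrix (Fin l') (Fin l') ℝ := (A⁻¹)ᵀ with hBdef
  have hBdet : IsUnit B.det := by
    rw [hBdef, det_transpose, det_nonsing_inv]
    exact isUnit_ringInverse.mpr hAdet
  have hMstep : ∀ i : ℤ, M (i + 1) = B * M i := by
    intro i
    have h := hshift i 0 1
    rw [zero_add] at h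
    -- (M i)ᵀ * N 0 = (M (i+1))ᵀ * N 1, N 1 = A * N 0
    have hN1 : N 1 = A * N 0 := by have := hNstep 0; rwa [zero_add] at this
    have hN0 : IsUnit (N 0).det := hNunit 0
    have key : (M (i + 1))ᵀ = (M i)ᵀ * A⁻¹ := by
      have h2 : (M i)ᵀ * N 0 = (M (i + 1))ᵀ * A * N 0 := by
        rw [h, hN1]; exact (mul_assoc _ _ _).symm
      have h3 := congrArg (· * (N 0)⁻¹) h2
      simp only [mul_assoc, mul_nonsing_inv _ hN0, mul_one] at h3
      rw [h3, mul_assoc, mul_nonsing_inv _ hAdet, mul_one]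
    have := congrArg Matrix.transpose key
    simp only [transpose_mul, transpose_transpose] at this
    rw [this, hBdef]
  have hM : ∀ i : ℤ, M i = B ^ i * M 0 := zpow_rec_aux B hBdet M hMstep
  exact ⟨A, B, hAdet, hBdet, hN, hM, rfl⟩
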